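/- Let p ≥ 2 and ν ∈ ℚ_{<0}. In the field H_{ℂ(λ)} of Hahn series over ℂ(λ) with value group ℚ, the unique solution g_2(λ, z) of the equation (λφ_p − z^ν)∘h(z)^{−1}∘(λφ_p − 1)(g_2) = z^ν·z^{ν/(p−1)}·(λ−1)², where h(z) = 1 + z^{−ν/(p−1)}, is g_2(λ, z) = 1 + (λ−1)·Σ_{k ≤ −1} λ^k z^{p^k ν/(p−1)}. -/

import Mathlib

private lemma ratX_ne_one : (RatFunc.X : RatFunc ℂ) ≠ 1 := by
  intro hX
  have h2 := congrArg RatFunc.num hX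
  rw [RatFunc.num_X, RatFunc.num_one] at h2
  have h3 := congrArg (fun q => Polynomial.coeff q 0) h2
  simp [Polynomial.coeff_X_zero] at h3

/-- Key injectivity: if `u.coeff b = X * u.coeff ((ν + b)/p)` for all `b`, then `u = 0`. -/
private lemma aux_inj (p : ℕ) (hp : 2 ≤ p) (ν : ℚ)
    (u : HahnSeries ℚ (RatFunc ℂ))
    (hu : ∀ b : ℚ, u.coeff b = (RatFunc.X : RatFunc ℂ) * u.coeff ((ν + b) / p)) : u = 0 := by
  by_contra h0
  have hp1 : (1 : ℚ) < (p : ℚ) := by exact_mod_cast lt_of_lt_of_le one_lt_two hp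
  have hpm : (0 : ℚ) < (p : ℚ) - 1 := by linarith
  have hpQ : (0 : ℚ) < (p : ℚ) := by linarith
  have hpne : (p : ℚ) ≠ 0 := ne_of_gt hpQ
  set a := u.order with ha
  have hca : u.coeff a ≠ 0 := fun hz => h0 (HahnSeries.coeff_order_eq_zero.mp hz)
  have h1 : u.coeff ((ν + a) / p) ≠ 0 := by
    intro hzz
    rw [hu a, hzz, mul_zero] at hca
    exact hca rfl
  have hle1 : a ≤ (ν + a) / p := HahnSeries.order_le_of_coeff_ne_zero h1
  have h2 : u.coeff ((p : ℚ) * a - ν) ≠ 0 := by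
    have h3 := hu ((p : ℚ) * a - ν)
    have harg : (ν + ((p : ℚ) * a - ν)) / p = a := by field_simp; ring
    rw [harg] at h3
    rw [h3]
    exact mul_ne_zero RatFunc.X_ne_zero hca
  have hle2 : a ≤ (p : ℚ) * a - ν := HahnSeries.order_le_of_coeff_ne_zero h2
  have hle1' : a * (p : ℚ) ≤ ν + a := (le_div_iff₀ hpQ).mp hle1
  have hac : a = ν / ((p : ℚ) - 1) := by
    rw [eq_div_iff (ne_of_gt hpm)]
    nlinarith
  have harg2 : (ν + ν / ((p : ℚ) - 1)) / p = ν / ((p : ℚ) - 1) := by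
    field_simp
    ring
  have h4 := hu (ν / ((p : ℚ) - 1))
  rw [harg2] at h4
  have hcc : u.coeff (ν / ((p : ℚ) - 1)) = 0 := by
    have h5 : ((1 : RatFunc ℂ) - RatFunc.X) * u.coeff (ν / ((p : ℚ) - 1)) = 0 := by
      linear_combination h4
    rcases mul_eq_zero.mp h5 with h6 | h6
    · exact absurd (sub_eq_zero.mp h6).symm ratX_ne_one
    · exact h6
  rw [hac] at hca
  exact hca hcc

/-- Let `p ≥ 2` and `ν ∈ ℚ_{<0}`. In the field of Hahn series over `ℂ(λ)` (here
`RatFunc ℂ`, `λ = RatFunc.X`) with value group `ℚ`, the unique solution `g₂` of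
`(λφ_p − z^ν) ∘ h⁻¹ ∘ (λφ_p − 1) (g₂) = z^ν·z^{ν/(p−1)}·(λ−1)²`, where
`h = 1 + z^{−ν/(p−1)}`, is `g₂ = 1 + (λ−1)·Σ_{k ≤ −1} λ^k z^{p^k ν/(p−1)}`.
The Hahn series `S = Σ_{k ≤ −1} λ^k z^{p^k ν/(p−1)}` is specified through its
coefficients. -/
theorem mahler_example_g2 (p : ℕ) (hp : 2 ≤ p) (ν : ℚ) (hν : ν < 0)
    (φ : HahnSeries ℚ (RatFunc ℂ) → HahnSeries ℚ (RatFunc ℂ))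
    (hφ : ∀ (f : HahnSeries ℚ (RatFunc ℂ)) (γ : ℚ), (φ f).coeff γ = f.coeff (γ / p))
    (S : HahnSeries ℚ (RatFunc ℂ))
    (hS1 : ∀ k : ℤ, k ≤ -1 →
      S.coeff ((p : ℚ) ^ k * ν / ((p : ℚ) - 1)) = (RatFunc.X : RatFunc ℂ) ^ k)
    (hS0 : ∀ γ : ℚ, (∀ k : ℤ, k ≤ -1 → γ ≠ (p : ℚ) ^ k * ν / ((p : ℚ) - 1)) →
      S.coeff γ = 0) :
    let h : HahnSeries ℚ (RatFunc ℂ) := 1 + HahnSeries.single (-ν / ((p : ℚ) - 1)) 1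
    let A : HahnSeries ℚ (RatFunc ℂ) → HahnSeries ℚ (RatFunc ℂ) :=
      fun y => (RatFunc.X : RatFunc ℂ) • φ y - y
    let B : HahnSeries ℚ (RatFunc ℂ) → HahnSeries ℚ (RatFunc ℂ) :=
      fun y => (RatFunc.X : RatFunc ℂ) • φ y - HahnSeries.single ν (1 : RatFunc ℂ) * y
    let rhs : HahnSeries ℚ (RatFunc ℂ) :=
      HahnSeries.single (ν + ν / ((p : ℚ) - 1)) (((RatFunc.X : RatFunc ℂ) - 1) ^ 2)
    let g₂ : HahnSeries ℚ (RatFunc ℂ) :=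
      1 + ((RatFunc.X : RatFunc ℂ) - 1) • S
    B (h⁻¹ * A g₂) = rhs ∧ ∀ f : HahnSeries ℚ (RatFunc ℂ), B (h⁻¹ * A f) = rhs → f = g₂ := by
  intro h A B rhs g₂
  have hL0 : (RatFunc.X : RatFunc ℂ) ≠ 0 := RatFunc.X_ne_zero
  have hp1 : (1 : ℚ) < (p : ℚ) := by exact_mod_cast lt_of_lt_of_le one_lt_two hp
  have hpm : (0 : ℚ) < (p : ℚ) - 1 := by linarith
  have hpQ : (0 : ℚ) < (p : ℚ) := by linarith
  have hpne : (p : ℚ) ≠ 0 := ne_of_gt hpQ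
  have hcneg : ν / ((p : ℚ) - 1) < 0 := div_neg_of_neg_of_pos hν hpm
  -- S vanishes at 0
  have hSzero : S.coeff 0 = 0 := by
    apply hS0
    intro k _ h0
    exact (div_ne_zero (mul_ne_zero (zpow_ne_zero k hpne) (ne_of_lt hν)) (ne_of_gt hpm)).symm h0
  -- S vanishes at ν/(p-1)
  have hSc : S.coeff (ν / ((p : ℚ) - 1)) = 0 := by
    apply hS0
    intro k hk heq
    have hk1 : (1 : ℚ) < (p : ℚ) ^ (-k) := one_lt_zpow₀ hp1 (by linarith)
    have hk2 : (p : ℚ) ^ k < 1 := by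
      rw [show k = -(-k) by ring, zpow_neg]
      exact inv_lt_one_of_one_lt₀ hk1
    rw [div_eq_div_iff (ne_of_gt hpm) (ne_of_gt hpm)] at heq
    -- heq : ν * (p - 1) = p ^ k * ν * (p - 1)
    have h3 : ν = (p : ℚ) ^ k * ν := mul_right_cancel₀ (ne_of_gt hpm) heq
    nlinarith [h3, hk2, hν]
  -- the coefficient of S at ν/(p-1)/p is X⁻¹
  have hScp : S.coeff (ν / ((p : ℚ) - 1) / p) = (RatFunc.X : RatFunc ℂ) ^ (-1 : ℤ) := by
    have harg : ν / ((p : ℚ) - 1) / p = (p : ℚ) ^ (-1 : ℤ) * ν / ((p : ℚ) - 1) := by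
      rw [zpow_neg_one, inv_mul_eq_div, div_div, div_div, mul_comm]
    rw [harg]
    exact hS1 (-1) le_rfl
  -- coefficients of g₂
  have hg2c : ∀ δ : ℚ, g₂.coeff δ =
      (if δ = 0 then 1 else 0) + ((RatFunc.X : RatFunc ℂ) - 1) * S.coeff δ := by
    intro δ
    show ((1 : HahnSeries ℚ (RatFunc ℂ)) + ((RatFunc.X : RatFunc ℂ) - 1) • S).coeff δ = _
    rw [HahnSeries.coeff_add, HahnSeries.coeff_smul, HahnSeries.coeff_one,
      smul_eq_mul] <;> simp
  -- Step A : A g₂ = single c (X-1) + single 0 (X-1)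
  have hAg : A g₂ = HahnSeries.single (ν / ((p : ℚ) - 1)) ((RatFunc.X : RatFunc ℂ) - 1)
      + HahnSeries.single (0 : ℚ) ((RatFunc.X : RatFunc ℂ) - 1) := by
    show (RatFunc.X : RatFunc ℂ) • φ g₂ - g₂ = _
    ext γ
    rw [HahnSeries.coeff_sub, HahnSeries.coeff_smul, hφ, smul_eq_mul, hg2c, hg2c,
      HahnSeries.coeff_add, HahnSeries.coeff_single, HahnSeries.coeff_single]
    by_cases h0 : γ = 0
    · subst h0
      rw [zero_div, hSzero, if_pos rfl, if_pos rfl, if_neg hcneg.ne']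
      ring
    · rw [if_neg h0, if_neg h0, if_neg (div_ne_zero h0 hpne)]
      by_cases hc0 : γ = ν / ((p : ℚ) - 1)
      · subst hc0
        rw [if_pos rfl, hSc, hScp, zpow_neg_one]
        have hXinv : (RatFunc.X : RatFunc ℂ) * RatFunc.X⁻¹ = 1 := mul_inv_cancel₀ hL0
        linear_combination ((RatFunc.X : RatFunc ℂ) - 1) * hXinv
      · rw [if_neg hc0]
        by_cases hex : ∃ k : ℤ, k ≤ -1 ∧ γ = (p : ℚ) ^ k * ν / ((p : ℚ) - 1)
        · obtain ⟨k, hk, hγ⟩ := hex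
          subst hγ
          have hdiv : (p : ℚ) ^ k * ν / ((p : ℚ) - 1) / p
              = (p : ℚ) ^ (k - 1) * ν / ((p : ℚ) - 1) := by
            rw [zpow_sub_one₀ hpne]
            ring
          rw [hdiv, hS1 k hk, hS1 (k - 1) (by linarith)]
          have hXk : (RatFunc.X : RatFunc ℂ) * RatFunc.X ^ (k - 1) = RatFunc.X ^ k := by
            have h5 := zpow_add_one₀ hL0 (k - 1)
            rw [show k - 1 + 1 = k by ring] at h5
            rw [h5]
            ring
          linear_combination ((RatFunc.X : RatFunc ℂ) - 1) * hXk
        · push_neg at hex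
          have hSg : S.coeff γ = 0 := hS0 γ hex
          have hSgp : S.coeff (γ / p) = 0 := by
            apply hS0
            intro k hk heq
            have hγ : γ = (p : ℚ) ^ (k + 1) * ν / ((p : ℚ) - 1) := by
              have h6 : γ = (p : ℚ) ^ k * ν / ((p : ℚ) - 1) * p := by
                rw [← heq]
                field_simp
              rw [h6, zpow_add_one₀ hpne]
              ring
            rcases lt_or_eq_of_le hk with hk' | hk'
            · exact hex (k + 1) (by linarith) hγ
            · apply hc0
              rw [hγ, hk']
              norm_num
          rw [hSg, hSgp]
          ring
  -- product formula for h
  have hchw : h * HahnSeries.single (ν / ((p : ℚ) - 1)) ((RatFunc.X : RatFunc ℂ) - 1)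
      = HahnSeries.single (ν / ((p : ℚ) - 1)) ((RatFunc.X : RatFunc ℂ) - 1)
        + HahnSeries.single (0 : ℚ) ((RatFunc.X : RatFunc ℂ) - 1) := by
    show ((1 : HahnSeries ℚ (RatFunc ℂ)) + HahnSeries.single (-ν / ((p : ℚ) - 1)) 1) * _ = _
    rw [add_mul, one_mul, HahnSeries.single_mul_single, one_mul,
      show -ν / ((p : ℚ) - 1) + ν / ((p : ℚ) - 1) = 0 by ring]
  have hAg2 : A g₂ = h * HahnSeries.single (ν / ((p : ℚ) - 1)) ((RatFunc.X : RatFunc ℂ) - 1) := by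
    rw [hchw, hAg]
  -- h is nonzero
  have hh0 : h.coeff (0 : ℚ) = 1 := by
    have hhd : h = 1 + HahnSeries.single (-ν / ((p : ℚ) - 1)) (1 : RatFunc ℂ) := rfl
    rw [hhd, HahnSeries.coeff_add, HahnSeries.coeff_one, if_pos rfl, HahnSeries.coeff_single,
      if_neg (ne_of_lt (div_pos (neg_pos.mpr hν) hpm)), add_zero]
  have hhne : h ≠ 0 := by
    intro h0
    rw [h0, HahnSeries.coeff_zero] at hh0
    exact zero_ne_one hh0
  have hinv : h⁻¹ * A g₂
      = HahnSeries.single (ν / ((p : ℚ) - 1)) ((RatFunc.X : RatFunc ℂ) - 1) := by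
    rw [hAg2]
    exact inv_mul_cancel_left₀ (G₀ := HahnSeries ℚ (RatFunc ℂ)) hhne _
  -- helper : scalar mult of single
  have hsmul_single : ∀ (a : ℚ) (r : RatFunc ℂ),
      (RatFunc.X : RatFunc ℂ) • HahnSeries.single a r = HahnSeries.single a (RatFunc.X * r) := by
    intro a r
    ext γ
    rw [HahnSeries.coeff_smul, HahnSeries.coeff_single, HahnSeries.coeff_single, smul_eq_mul]
    split <;> simp
  have hsingle_sub : ∀ (a : ℚ) (r s : RatFunc ℂ),
      HahnSeries.single a r - HahnSeries.single a s = HahnSeries.single a (r - s) := by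
    intro a r s
    ext γ
    rw [HahnSeries.coeff_sub, HahnSeries.coeff_single, HahnSeries.coeff_single,
      HahnSeries.coeff_single]
    split <;> simp
  -- φ of single
  have hφw : φ (HahnSeries.single (ν / ((p : ℚ) - 1)) ((RatFunc.X : RatFunc ℂ) - 1))
      = HahnSeries.single ((p : ℚ) * (ν / ((p : ℚ) - 1))) ((RatFunc.X : RatFunc ℂ) - 1) := by
    ext γ
    rw [hφ, HahnSeries.coeff_single, HahnSeries.coeff_single]
    have hcond : (γ / (p : ℚ) = ν / ((p : ℚ) - 1)) ↔ (γ = (p : ℚ) * (ν / ((p : ℚ) - 1))) := by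
      rw [div_eq_iff hpne, mul_comm]
    by_cases hcase : γ = (p : ℚ) * (ν / ((p : ℚ) - 1))
    · rw [if_pos (hcond.mpr hcase), if_pos hcase]
    · rw [if_neg (fun hq => hcase (hcond.mp hq)), if_neg hcase]
  have hpc : (p : ℚ) * (ν / ((p : ℚ) - 1)) = ν + ν / ((p : ℚ) - 1) := by
    field_simp
    ring
  -- Step B : B (single c (X-1)) = rhs
  have hBw : B (HahnSeries.single (ν / ((p : ℚ) - 1)) ((RatFunc.X : RatFunc ℂ) - 1)) = rhs := by
    show (RatFunc.X : RatFunc ℂ) • φ _ - HahnSeries.single ν 1 * _ = rhs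
    rw [hφw, hsmul_single, HahnSeries.single_mul_single, one_mul, hpc, hsingle_sub]
    show HahnSeries.single (ν + ν / ((p : ℚ) - 1)) _
      = HahnSeries.single (ν + ν / ((p : ℚ) - 1)) (((RatFunc.X : RatFunc ℂ) - 1) ^ 2)
    rw [show (RatFunc.X : RatFunc ℂ) * (RatFunc.X - 1) - (RatFunc.X - 1)
      = (RatFunc.X - 1) ^ 2 by ring]
  constructor
  · rw [hinv]
    exact hBw
  · -- uniqueness
    intro f hf
    have hBg : B (h⁻¹ * A g₂) = rhs := by rw [hinv]; exact hBw
    have hE : B (h⁻¹ * A f) = B (h⁻¹ * A g₂) := by rw [hf, hBg]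
    -- injectivity of B
    have hxy : h⁻¹ * A f = h⁻¹ * A g₂ := by
      set x := h⁻¹ * A f with hx
      set y := h⁻¹ * A g₂ with hy
      have hE' : (RatFunc.X : RatFunc ℂ) • φ x - HahnSeries.single ν 1 * x
          = (RatFunc.X : RatFunc ℂ) • φ y - HahnSeries.single ν 1 * y := hE
      have hu : ∀ b : ℚ,
          (x - y).coeff b = (RatFunc.X : RatFunc ℂ) * (x - y).coeff ((ν + b) / p) := by
        intro b
        have hEc := congrArg (fun t => t.coeff (b + ν)) hE'
        simp only [HahnSeries.coeff_sub, HahnSeries.coeff_smul, hφ, smul_eq_mul,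
          HahnSeries.coeff_single_mul_add, one_mul] at hEc
        rw [HahnSeries.coeff_sub, HahnSeries.coeff_sub,
          show (ν + b) / (p : ℚ) = (b + ν) / (p : ℚ) by ring]
        linear_combination -hEc
      have h8 : x - y = 0 := aux_inj p hp ν (x - y) hu
      rw [sub_eq_zero] at h8
      exact h8
    have hAf : A f = A g₂ := by
      have h10 := congrArg (fun t => h * t) hxy
      rwa [← mul_assoc, ← mul_assoc,
        mul_inv_cancel₀ (G₀ := HahnSeries ℚ (RatFunc ℂ)) hhne, one_mul, one_mul] at h10
    have hAf' : (RatFunc.X : RatFunc ℂ) • φ f - f = (RatFunc.X : RatFunc ℂ) • φ g₂ - g₂ := hAf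
    have hv : ∀ b : ℚ, (f - g₂).coeff b
        = (RatFunc.X : RatFunc ℂ) * (f - g₂).coeff (((0 : ℚ) + b) / p) := by
      intro b
      have hEc := congrArg (fun t => t.coeff b) hAf'
      simp only [HahnSeries.coeff_sub, HahnSeries.coeff_smul, hφ, smul_eq_mul] at hEc
      rw [HahnSeries.coeff_sub, HahnSeries.coeff_sub, zero_add]
      linear_combination -hEc
    have h9 : f - g₂ = 0 := aux_inj p hp 0 (f - g₂) hv
    rw [sub_eq_zero] at h9
    exact h9
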